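/- arXiv:1809.05569 — 2 statements merged into one kernel-verified Lean document; each statement's English description precedes it below -/
import Mathlib

section
/- Let Q be a finite generalized quadrangle of order (s,t) and let p be a prime dividing the order of the automorphism group of Q. If p does not divide st+1, then p ≤ max{s+1, t+1}. -/
/-- `IsGQ I s t` : the incidence relation `I` between the (finite) point type `P`
and line type `L` is a finite generalized quadrangle of order `(s,t)`. -/
structure IsGQ {P L : Type*} (I : P → L → Prop) (s t : ℕ) : Prop where
  finP : Finite P
  finL : Finite L
  s_pos : 0 < s
  t_pos : 0 < t
  line_pts : ∀ ℓ : L, Nat.card {p : P // I p ℓ} = s + 1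
  pt_lines : ∀ p : P, Nat.card {ℓ : L // I p ℓ} = t + 1
  unique_line : ∀ p q : P, p ≠ q → Nat.card {ℓ : L // I p ℓ ∧ I q ℓ} ≤ 1
  gq_axiom : ∀ (p : P) (ℓ : L), ¬ I p ℓ →
      ∃! pl : P × L, I p pl.2 ∧ I pl.1 pl.2 ∧ I pl.1 ℓ

/-- An automorphism of the incidence structure `I` : a pair of permutations of the
points and of the lines preserving incidence. -/
@[ext] structure GQAut {P L : Type*} (I : P → L → Prop) where
  permP : Equiv.Perm P
  permL : Equiv.Perm L
  pres : ∀ p ℓ, I (permP p) (permL ℓ) ↔ I p ℓ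

namespace GQAut

variable {P L : Type*} {I : P → L → Prop}

instance : Group (GQAut I) where
  mul x y := ⟨x.permP * y.permP, x.permL * y.permL, by
    intro p ℓ
    simp only [Equiv.Perm.mul_apply]
    rw [x.pres, y.pres]⟩
  one := ⟨1, 1, fun p ℓ => Iff.rfl⟩
  inv x := ⟨x.permP⁻¹, x.permL⁻¹, by
    intro p ℓ
    simpa using (x.pres (x.permP⁻¹ p) (x.permL⁻¹ ℓ)).symm⟩
  mul_assoc a b c := by ext <;> rfl
  one_mul a := by ext <;> rfl
  mul_one a := by ext <;> rfl
  inv_mul_cancel a := by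
    ext z
    · show a.permP⁻¹ (a.permP z) = z
      simp
    · show a.permL⁻¹ (a.permL z) = z
      simp

end GQAut

/-- Two points are collinear if some line is incident with both. -/
def Collin {P L : Type*} (I : P → L → Prop) (p q : P) : Prop := ∃ ℓ, I p ℓ ∧ I q ℓ

/-- Two lines are concurrent if some point is incident with both. -/
def Concur {P L : Type*} (I : P → L → Prop) (ℓ m : L) : Prop := ∃ p, I p ℓ ∧ I p m

/-- Number of points fixed by the automorphism `x`. -/
noncomputable def alpha0 {P L : Type*} {I : P → L → Prop} (x : GQAut I) : ℕ :=
  Nat.card {p : P // x.permP p = p}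

/-- Number of points moved by `x` to a distinct collinear point. -/
noncomputable def alpha1 {P L : Type*} {I : P → L → Prop} (x : GQAut I) : ℕ :=
  Nat.card {p : P // x.permP p ≠ p ∧ Collin I p (x.permP p)}

/-- Number of points sent by `x` to a noncollinear point. -/
noncomputable def alpha2 {P L : Type*} {I : P → L → Prop} (x : GQAut I) : ℕ :=
  Nat.card {p : P // ¬ Collin I p (x.permP p)}

/-- Number of lines fixed by the automorphism `x`. -/
noncomputable def beta0 {P L : Type*} {I : P → L → Prop} (x : GQAut I) : ℕ :=
  Nat.card {ℓ : L // x.permL ℓ = ℓ}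

/-- Number of lines moved by `x` to a distinct concurrent line. -/
noncomputable def beta1 {P L : Type*} {I : P → L → Prop} (x : GQAut I) : ℕ :=
  Nat.card {ℓ : L // x.permL ℓ ≠ ℓ ∧ Concur I ℓ (x.permL ℓ)}

/-- Number of lines sent by `x` to a nonconcurrent line. -/
noncomputable def beta2 {P L : Type*} {I : P → L → Prop} (x : GQAut I) : ℕ :=
  Nat.card {ℓ : L // ¬ Concur I ℓ (x.permL ℓ)}

/-- The automorphism group is transitive on points. -/
def PointTransitive {P L : Type*} (I : P → L → Prop) : Prop :=
  ∀ p q : P, ∃ x : GQAut I, x.permP p = q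

/-- The automorphism group is transitive on lines. -/
def LineTransitive {P L : Type*} (I : P → L → Prop) : Prop :=
  ∀ ℓ m : L, ∃ x : GQAut I, x.permL ℓ = m

/-- The fixed substructure of `x` has type (2): there is a fixed point `P₀` collinear
with every fixed point, at least one line is fixed, and every fixed line passes through `P₀`. -/
def FixedType2 {P L : Type*} (I : P → L → Prop) (x : GQAut I) : Prop :=
  ∃ P₀ : P, x.permP P₀ = P₀ ∧ (∀ p, x.permP p = p → Collin I P₀ p) ∧
    (∃ ℓ, x.permL ℓ = ℓ) ∧ (∀ ℓ, x.permL ℓ = ℓ → I P₀ ℓ)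

/-- The fixed substructure of `x` has type (2'): there is a fixed line `ℓ₀` concurrent
with every fixed line, at least one point is fixed, and every fixed point lies on `ℓ₀`. -/
def FixedType2' {P L : Type*} (I : P → L → Prop) (x : GQAut I) : Prop :=
  ∃ ℓ₀ : L, x.permL ℓ₀ = ℓ₀ ∧ (∀ ℓ, x.permL ℓ = ℓ → Concur I ℓ₀ ℓ) ∧
    (∃ p, x.permP p = p) ∧ (∀ p, x.permP p = p → I p ℓ₀)

/-- The fixed substructure of `x` (fixed points and fixed lines with induced incidence)
is a generalized subquadrangle of order `(s', t')`. -/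
def FixedSubGQ {P L : Type*} (I : P → L → Prop) (x : GQAut I) (s' t' : ℕ) : Prop :=
  IsGQ (fun (p : {p : P // x.permP p = p}) (ℓ : {ℓ : L // x.permL ℓ = ℓ}) => I p.1 ℓ.1) s' t'


section AuxPerm

open Equiv

lemma dvd_support_card {α : Type*} [Fintype α] [DecidableEq α] {f : Equiv.Perm α} {p : ℕ}
    (hp : p.Prime) (hf : f ^ p = 1) : p ∣ f.support.card := by
  rw [← Equiv.Perm.sum_cycleType]
  apply Multiset.dvd_sum
  intro n hn
  have h2 := Equiv.Perm.two_le_of_mem_cycleType hn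
  have hd : n ∣ p := (Multiset.dvd_lcm hn).trans
    (by rw [Equiv.Perm.lcm_cycleType]; exact orderOf_dvd_of_pow_eq_one hf)
  rcases hp.eq_one_or_self_of_dvd n hd with h | h
  · omega
  · rw [h]

lemma exists_fixed_of_pow_eq_one {α : Type*} [Finite α] {f : Equiv.Perm α} {p : ℕ}
    (hp : p.Prime) (hf : f ^ p = 1) (h : ¬ p ∣ Nat.card α) : ∃ a, f a = a := by
  classical
  haveI : Fintype α := Fintype.ofFinite α
  by_contra hc
  push_neg at hc
  have hs : f.support = Finset.univ :=
    Finset.eq_univ_iff_forall.mpr fun a => Equiv.Perm.mem_support.mpr (hc a)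
  have hd := dvd_support_card hp hf
  rw [hs, Finset.card_univ, ← Nat.card_eq_fintype_card] at hd
  exact h hd

lemma all_fixed_of_card_lt {α : Type*} [Finite α] {f : Equiv.Perm α} {p : ℕ}
    (hp : p.Prime) (hf : f ^ p = 1) (h : Nat.card α < p) : ∀ a, f a = a := by
  classical
  haveI : Fintype α := Fintype.ofFinite α
  intro a
  by_contra ha
  have hmem : a ∈ f.support := Equiv.Perm.mem_support.mpr ha
  have h1 : 0 < f.support.card := Finset.card_pos.mpr ⟨a, hmem⟩
  have h3 : p ≤ f.support.card := Nat.le_of_dvd h1 (dvd_support_card hp hf)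
  have h4 : f.support.card ≤ Fintype.card α := Finset.card_le_univ _
  rw [Nat.card_eq_fintype_card] at h
  omega

end AuxPerm

section AuxCard

lemma card_pred_split {α : Type*} [Finite α] {Q : α → Prop} {a : α} (ha : Q a) :
    Nat.card {x // Q x} = Nat.card {x // Q x ∧ x ≠ a} + 1 := by
  classical
  haveI : Fintype α := Fintype.ofFinite α
  have e1 : {x // Q x ∧ x ≠ a} ≃ {v : {x // Q x} // ¬ v = ⟨a, ha⟩} :=
    { toFun := fun u => ⟨⟨u.1, u.2.1⟩, fun h => u.2.2 (congrArg Subtype.val h)⟩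
      invFun := fun v => ⟨v.1.1, v.1.2, fun h => v.2 (Subtype.ext h)⟩
      left_inv := fun u => rfl
      right_inv := fun v => rfl }
  rw [Nat.card_congr e1, Nat.card_eq_fintype_card, Nat.card_eq_fintype_card,
    Fintype.card_subtype_compl, Fintype.card_subtype_eq]
  have hpos : 0 < Fintype.card {x // Q x} := Fintype.card_pos_iff.mpr ⟨⟨a, ha⟩⟩
  omega

lemma card_sigma_const {ι : Type*} [Finite ι] (f : ι → Type*) [∀ i, Finite (f i)] (c : ℕ)
    (h : ∀ i, Nat.card (f i) = c) : Nat.card (Σ i, f i) = Nat.card ι * c := by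
  classical
  haveI : Fintype ι := Fintype.ofFinite ι
  haveI : ∀ i, Fintype (f i) := fun i => Fintype.ofFinite (f i)
  rw [Nat.card_eq_fintype_card, Nat.card_eq_fintype_card, Fintype.card_sigma]
  have h' : ∀ i, Fintype.card (f i) = c := fun i => by
    rw [← Nat.card_eq_fintype_card]; exact h i
  simp [h', Finset.sum_const, Finset.card_univ, mul_comm]

end AuxCard

section AuxGQ

variable {P L : Type*} {I : P → L → Prop} {s t : ℕ}

lemma line_unique (hGQ : IsGQ I s t) {a b : P} (hab : a ≠ b) {ℓ m : L}
    (h1 : I a ℓ) (h2 : I b ℓ) (h3 : I a m) (h4 : I b m) : ℓ = m := by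
  haveI := hGQ.finL
  have h := hGQ.unique_line a b hab
  haveI : Nonempty {n // I a n ∧ I b n} := ⟨⟨ℓ, h1, h2⟩⟩
  have h1' : Nat.card {n // I a n ∧ I b n} = 1 := le_antisymm h Nat.card_pos
  obtain ⟨z, hz⟩ := Nat.card_eq_one_iff_exists.mp h1'
  exact congrArg Subtype.val ((hz ⟨ℓ, h1, h2⟩).trans (hz ⟨m, h3, h4⟩).symm)

lemma not_collin (hGQ : IsGQ I s t) {q u r : P} {ℓ₀ m : L} (hqℓ : I q ℓ₀)
    (huℓ : I u ℓ₀) (hu : u ≠ q) (hum : I u m) (hm : m ≠ ℓ₀) (hrm : I r m) (hr : r ≠ u) :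
    ¬ Collin I q r := by
  rintro ⟨n, hqn, hrn⟩
  have hrℓ₀ : ¬ I r ℓ₀ := fun h => hm (line_unique hGQ hr hrm hum h huℓ)
  have h1 := (hGQ.gq_axiom r ℓ₀ hrℓ₀).unique (y₁ := (u, m)) (y₂ := (q, n))
    ⟨hrm, hum, huℓ⟩ ⟨hrn, hqn, hqℓ⟩
  exact hu (congrArg Prod.fst h1)

lemma card_P (hGQ : IsGQ I s t) (q : P) :
    Nat.card P = (s + 1) * (s * t + 1) := by
  classical
  haveI := hGQ.finP
  haveI := hGQ.finL
  obtain ⟨ℓ₀, hℓ₀⟩ : ∃ ℓ, I q ℓ := by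
    have h : 0 < Nat.card {ℓ // I q ℓ} := by rw [hGQ.pt_lines]; omega
    obtain ⟨⟨ℓ, hℓ⟩⟩ := (Nat.card_pos_iff.mp h).1
    exact ⟨ℓ, hℓ⟩
  have hsplit : Nat.card P = Nat.card {r // Collin I q r} + Nat.card {r // ¬ Collin I q r} := by
    rw [← Nat.card_sum]
    exact (Nat.card_congr (Equiv.sumCompl _)).symm
  have hcolq : Collin I q q := ⟨ℓ₀, hℓ₀, hℓ₀⟩
  have hB : Nat.card {r // Collin I q r ∧ r ≠ q} = (t + 1) * s := by
    have hbij : Function.Bijective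
        (fun z : Σ ℓ : {ℓ // I q ℓ}, {u // I u ℓ.1 ∧ u ≠ q} =>
          (⟨z.2.1, ⟨z.1.1, z.1.2, z.2.2.1⟩, z.2.2.2⟩ : {r // Collin I q r ∧ r ≠ q})) := by
      constructor
      · rintro ⟨⟨ℓ1, h1⟩, ⟨u1, hu1, hn1⟩⟩ ⟨⟨ℓ2, h2⟩, ⟨u2, hu2, hn2⟩⟩ hh
        have hu : u1 = u2 := congrArg Subtype.val hh
        subst hu
        have hl : ℓ1 = ℓ2 := line_unique hGQ (Ne.symm hn1) h1 hu1 h2 hu2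
        subst hl
        rfl
      · rintro ⟨r, ⟨ℓ, hqℓ, hrℓ⟩, hrq⟩
        exact ⟨⟨⟨ℓ, hqℓ⟩, ⟨r, hrℓ, hrq⟩⟩, rfl⟩
    have hfib : ∀ ℓ : {ℓ // I q ℓ}, Nat.card {u // I u ℓ.1 ∧ u ≠ q} = s := by
      intro ℓ
      have h : Nat.card {u // I u ℓ.1} = Nat.card {u // I u ℓ.1 ∧ u ≠ q} + 1 :=
        card_pred_split ℓ.2
      rw [hGQ.line_pts] at h
      omega
    rw [← Nat.card_eq_of_bijective _ hbij,
      card_sigma_const (fun ℓ : {ℓ // I q ℓ} => {u // I u ℓ.1 ∧ u ≠ q}) s hfib,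
      hGQ.pt_lines]
  have hBfull : Nat.card {r // Collin I q r} = (t + 1) * s + 1 := by
    rw [card_pred_split (Q := Collin I q) hcolq, hB]
  have hC : Nat.card {r // ¬ Collin I q r} = s * (t * s) := by
    have hbij : Function.Bijective
        (fun z : Σ u : {u // I u ℓ₀ ∧ u ≠ q},
            Σ m : {m // I u.1 m ∧ m ≠ ℓ₀}, {r // I r m.1 ∧ r ≠ u.1} =>
          (⟨z.2.2.1, not_collin hGQ hℓ₀ z.1.2.1 z.1.2.2 z.2.1.2.1 z.2.1.2.2
            z.2.2.2.1 z.2.2.2.2⟩ : {r // ¬ Collin I q r})) := by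
      constructor
      · rintro ⟨⟨u1, hu1ℓ, hu1q⟩, ⟨m1, hm1u, hm1ℓ⟩, ⟨r1, hr1m, hr1u⟩⟩
          ⟨⟨u2, hu2ℓ, hu2q⟩, ⟨m2, hm2u, hm2ℓ⟩, ⟨r2, hr2m, hr2u⟩⟩ hh
        have hr : r1 = r2 := congrArg Subtype.val hh
        subst hr
        have hnc : ¬ Collin I q r1 := not_collin hGQ hℓ₀ hu1ℓ hu1q hm1u hm1ℓ hr1m hr1u
        have hrℓ₀ : ¬ I r1 ℓ₀ := fun h => hnc ⟨ℓ₀, hℓ₀, h⟩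
        have heq := (hGQ.gq_axiom r1 ℓ₀ hrℓ₀).unique (y₁ := (u1, m1)) (y₂ := (u2, m2))
          ⟨hr1m, hm1u, hu1ℓ⟩ ⟨hr2m, hm2u, hu2ℓ⟩
        have hu : u1 = u2 := congrArg Prod.fst heq
        have hm : m1 = m2 := congrArg Prod.snd heq
        subst hu
        subst hm
        rfl
      · rintro ⟨r, hnc⟩
        have hrℓ₀ : ¬ I r ℓ₀ := fun h => hnc ⟨ℓ₀, hℓ₀, h⟩
        obtain ⟨⟨u, m⟩, ⟨hrm, hum, huℓ⟩, -⟩ := hGQ.gq_axiom r ℓ₀ hrℓ₀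
        have hune : u ≠ q := fun h => hnc ⟨m, h ▸ hum, hrm⟩
        have hmne : m ≠ ℓ₀ := fun h => hrℓ₀ (h ▸ hrm)
        have hrne : r ≠ u := fun h => hnc ⟨ℓ₀, hℓ₀, h ▸ huℓ⟩
        exact ⟨⟨⟨u, huℓ, hune⟩, ⟨m, hum, hmne⟩, ⟨r, hrm, hrne⟩⟩, rfl⟩
    have hu : Nat.card {u // I u ℓ₀ ∧ u ≠ q} = s := by
      have h : Nat.card {u // I u ℓ₀} = Nat.card {u // I u ℓ₀ ∧ u ≠ q} + 1 :=
        card_pred_split hℓ₀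
      rw [hGQ.line_pts] at h
      omega
    have hinner : ∀ u : {u // I u ℓ₀ ∧ u ≠ q},
        Nat.card (Σ m : {m // I u.1 m ∧ m ≠ ℓ₀}, {r // I r m.1 ∧ r ≠ u.1}) = t * s := by
      intro u
      have hm : Nat.card {m // I u.1 m ∧ m ≠ ℓ₀} = t := by
        have h : Nat.card {m // I u.1 m} = Nat.card {m // I u.1 m ∧ m ≠ ℓ₀} + 1 :=
          card_pred_split u.2.1
        rw [hGQ.pt_lines] at h
        omega
      have hr : ∀ m : {m // I u.1 m ∧ m ≠ ℓ₀}, Nat.card {r // I r m.1 ∧ r ≠ u.1} = s := by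
        intro m
        have h : Nat.card {r // I r m.1} = Nat.card {r // I r m.1 ∧ r ≠ u.1} + 1 :=
          card_pred_split m.2.1
        rw [hGQ.line_pts] at h
        omega
      rw [card_sigma_const _ s hr, hm]
    rw [← Nat.card_eq_of_bijective _ hbij, card_sigma_const _ (t * s) hinner, hu]
  rw [hsplit, hBfull, hC]
  ring

end AuxGQ

section AuxAut

variable {P L : Type*} {I : P → L → Prop}

lemma GQAut.permP_pow (x : GQAut I) (n : ℕ) : (x ^ n).permP = x.permP ^ n := by
  induction n with
  | zero => rw [pow_zero, pow_zero]; rfl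
  | succ n ih => rw [pow_succ, pow_succ, ← ih]; rfl

lemma GQAut.permL_pow (x : GQAut I) (n : ℕ) : (x ^ n).permL = x.permL ^ n := by
  induction n with
  | zero => rw [pow_zero, pow_zero]; rfl
  | succ n ih => rw [pow_succ, pow_succ, ← ih]; rfl

end AuxAut

/-- If a prime p divides the order of the automorphism group of a GQ
of order (s,t) and p does not divide st+1, then p ≤ max(s+1, t+1). -/
theorem statement16 {P L : Type*} (I : P → L → Prop) (s t : ℕ)
    (hGQ : IsGQ I s t) (p : ℕ) (hp : p.Prime)
    (hdvd : p ∣ Nat.card (GQAut I)) (hndvd : ¬ p ∣ s * t + 1) :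
    p ≤ max (s + 1) (t + 1) := by
  classical
  haveI := hGQ.finP
  haveI := hGQ.finL
  by_contra hle
  push_neg at hle
  obtain ⟨hs1, ht1⟩ := max_lt_iff.mp hle
  have hspos := hGQ.s_pos
  have htpos := hGQ.t_pos
  haveI : Finite (GQAut I) := Finite.of_injective (fun x => (x.permP, x.permL))
    (fun a b h => by
      have h1 : a.permP = b.permP := congrArg Prod.fst h
      have h2 : a.permL = b.permL := congrArg Prod.snd h
      cases a; cases b
      simp_all)
  haveI : Fact p.Prime := ⟨hp⟩
  obtain ⟨x, hx⟩ := exists_prime_orderOf_dvd_card' p hdvd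
  have hxp : x ^ p = 1 := by rw [← hx]; exact pow_orderOf_eq_one x
  have hPp : x.permP ^ p = 1 := by rw [← GQAut.permP_pow, hxp]; rfl
  have hLp : x.permL ^ p = 1 := by rw [← GQAut.permL_pow, hxp]; rfl
  cases isEmpty_or_nonempty P with
  | inl hE =>
    have hx1 : x = 1 := by
      haveI : IsEmpty L := ⟨fun ℓ => by
        have h := hGQ.line_pts ℓ
        rw [Nat.card_of_isEmpty] at h
        omega⟩
      ext z
      · exact isEmptyElim z
      · exact isEmptyElim z
    rw [hx1, orderOf_one] at hx
    exact hp.one_lt.ne hx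
  | inr hne =>
    obtain ⟨q₀⟩ := hne
    have hnd : ¬ p ∣ Nat.card P := by
      rw [card_P hGQ q₀]
      intro hpd
      rcases hp.dvd_mul.mp hpd with h | h
      · have := Nat.le_of_dvd (by omega) h
        omega
      · exact hndvd h
    obtain ⟨q, hq⟩ := exists_fixed_of_pow_eq_one hp hPp hnd
    have lines_fixed : ∀ a : P, x.permP a = a → ∀ ℓ, I a ℓ → x.permL ℓ = ℓ := by
      intro a ha ℓ hℓ
      have hiff : ∀ m, I a m ↔ I a (x.permL m) := fun m => by
        conv_rhs => rw [← ha]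
        exact (x.pres a m).symm
      have hg : (x.permL.subtypePerm (fun m => (hiff m).symm)) ^ p = 1 := by
        rw [Equiv.Perm.subtypePerm_pow]
        ext m
        simp [Equiv.Perm.subtypePerm_apply, hLp]
      have hcard : Nat.card {m // I a m} < p := by rw [hGQ.pt_lines]; omega
      have h := all_fixed_of_card_lt hp hg hcard ⟨ℓ, hℓ⟩
      simpa [Equiv.Perm.subtypePerm_apply, Subtype.ext_iff] using h
    have pts_fixed : ∀ ℓ : L, x.permL ℓ = ℓ → ∀ a, I a ℓ → x.permP a = a := by
      intro ℓ hℓ a ha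
      have hiff : ∀ b, I b ℓ ↔ I (x.permP b) ℓ := fun b => by
        conv_rhs => rw [← hℓ]
        exact (x.pres b ℓ).symm
      have hg : (x.permP.subtypePerm (p := fun b => I b ℓ) (fun m => (hiff m).symm)) ^ p = 1 := by
        rw [Equiv.Perm.subtypePerm_pow]
        ext m
        simp [Equiv.Perm.subtypePerm_apply, hPp]
      have hcard : Nat.card {b // I b ℓ} < p := by rw [hGQ.line_pts]; omega
      have h := all_fixed_of_card_lt hp hg hcard ⟨a, ha⟩
      simpa [Equiv.Perm.subtypePerm_apply, Subtype.ext_iff] using h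
    obtain ⟨ℓ₀, hℓ₀⟩ : ∃ ℓ, I q ℓ := by
      have h : 0 < Nat.card {ℓ // I q ℓ} := by rw [hGQ.pt_lines]; omega
      obtain ⟨⟨ℓ, hℓ⟩⟩ := (Nat.card_pos_iff.mp h).1
      exact ⟨ℓ, hℓ⟩
    have hℓ₀f : x.permL ℓ₀ = ℓ₀ := lines_fixed q hq ℓ₀ hℓ₀
    have allP : ∀ r, x.permP r = r := by
      intro r
      by_cases hr : I r ℓ₀
      · exact pts_fixed ℓ₀ hℓ₀f r hr
      · obtain ⟨⟨u, m⟩, ⟨hrm, hum, huℓ⟩, -⟩ := hGQ.gq_axiom r ℓ₀ hr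
        exact pts_fixed m (lines_fixed u (pts_fixed ℓ₀ hℓ₀f u huℓ) m hum) r hrm
    have allL : ∀ m : L, x.permL m = m := by
      intro m
      haveI : Fintype {a // I a m} := Fintype.ofFinite _
      have h2 : 1 < Fintype.card {a // I a m} := by
        rw [← Nat.card_eq_fintype_card, hGQ.line_pts]; omega
      haveI := Fintype.one_lt_card_iff_nontrivial.mp h2
      obtain ⟨a, b, hab⟩ := exists_pair_ne {a // I a m}
      have ha' : I a.1 (x.permL m) := by
        have h := (x.pres a.1 m).mpr a.2
        rwa [allP a.1] at h
      have hb' : I b.1 (x.permL m) := by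
        have h := (x.pres b.1 m).mpr b.2
        rwa [allP b.1] at h
      have hab' : a.1 ≠ b.1 := fun h => hab (Subtype.ext h)
      exact line_unique hGQ hab' ha' hb' a.2 b.2
    have hx1 : x = 1 := by
      ext z
      · exact allP z
      · exact allL z
    rw [hx1, orderOf_one] at hx
    exact hp.one_lt.ne hx
end

section
/- Let Q be a finite generalized quadrangle of order (4,12). If x is an automorphism of Q of order 7, then x fixes no point of Q. -/
open Finset in
/-- Fixed points of a permutation of order dividing 7 are congruent mod 7 to the total. -/
private lemma fixed_modEq {α : Type*} [Finite α] (g : Equiv.Perm α) (hg : g ^ 7 = 1) :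
    Nat.card α ≡ Nat.card {a : α // g a = a} [MOD 7] := by
  haveI : Fact (Nat.Prime 7) := ⟨by norm_num⟩
  have hG : IsPGroup 7 (Subgroup.zpowers g) := by
    intro h
    obtain ⟨k, hk⟩ := Subgroup.mem_zpowers_iff.mp h.2
    refine ⟨1, ?_⟩
    have hpow : ((g ^ k) ^ (7 : ℕ)) = (1 : Equiv.Perm α) := by
      rw [← zpow_natCast (g ^ k) 7, ← zpow_mul, mul_comm, zpow_mul, zpow_natCast, hg, one_zpow]
    have hco : ((h : Equiv.Perm α)) ^ (7 : ℕ) = 1 := by rw [← hk]; exact hpow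
    exact Subtype.ext (by rw [pow_one]; simpa using hco)
  have hmod := hG.card_modEq_card_fixedPoints α
  have hfixiter : ∀ a : α, g a = a → ∀ k : ℤ, (g ^ k) a = a := by
    intro a ha k
    have hinv : g⁻¹ a = a := by conv_lhs => rw [← ha]; rw [← Equiv.Perm.mul_apply, inv_mul_cancel, Equiv.Perm.one_apply]
    induction k using Int.induction_on with
    | zero => simp
    | succ n ih => rw [zpow_add, zpow_one, Equiv.Perm.mul_apply, ha, ih]
    | pred n ih => rw [sub_eq_add_neg, zpow_add, Equiv.Perm.mul_apply, zpow_neg_one, hinv, ih]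
  have e : (MulAction.fixedPoints (Subgroup.zpowers g) α) ≃ {a : α // g a = a} := by
    refine Equiv.subtypeEquivRight fun a => ?_
    simp only [MulAction.mem_fixedPoints]
    constructor
    · intro h
      have := h ⟨g, Subgroup.mem_zpowers g⟩
      simpa [Subgroup.smul_def, Equiv.Perm.smul_def] using this
    · intro h u
      obtain ⟨k, hk⟩ := Subgroup.mem_zpowers_iff.mp u.2
      show u • a = a
      rw [Subgroup.smul_def, Equiv.Perm.smul_def, ← hk]
      exact hfixiter a h k
  exact (Nat.card_congr e) ▸ hmod

private lemma filter_fixed_modEq {α : Type*} [Fintype α] (g : Equiv.Perm α) (hg : g ^ 7 = 1)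
    (pr : α → Prop) [DecidablePred pr] [DecidablePred fun a => g a = a] (hstab : ∀ a, pr a ↔ pr (g a)) :
    (Finset.univ.filter pr).card ≡
      (Finset.univ.filter fun a => pr a ∧ g a = a).card [MOD 7] := by
  classical
  have h1 : (g.subtypePerm (fun a => (hstab a).symm)) ^ 7 = 1 := by
    ext a
    simp [Equiv.Perm.subtypePerm_pow, Equiv.Perm.subtypePerm_apply, hg]
  have h2 := fixed_modEq (g.subtypePerm (fun a => (hstab a).symm)) h1
  have e : {b : {a // pr a} // g.subtypePerm (fun a => (hstab a).symm) b = b} ≃ {a : α // pr a ∧ g a = a} :=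
    { toFun := fun b => ⟨b.1.1, b.1.2, congrArg Subtype.val b.2⟩
      invFun := fun a => ⟨⟨a.1, a.2.1⟩, Subtype.ext a.2.2⟩
      left_inv := fun b => Subtype.ext (Subtype.ext rfl)
      right_inv := fun a => rfl }
  have c1 : Nat.card {a : α // pr a} = (Finset.univ.filter pr).card := by
    rw [Nat.card_eq_fintype_card, Fintype.card_subtype]
  have c2 : Nat.card {a : α // pr a ∧ g a = a} =
      (Finset.univ.filter fun a => pr a ∧ g a = a).card := by
    rw [Nat.card_eq_fintype_card, Fintype.card_subtype]
  rw [c1, Nat.card_congr e, c2] at h2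
  exact h2

/-- `permP` as a monoid hom. -/
private def permPHom {P L : Type*} (I : P → L → Prop) : GQAut I →* Equiv.Perm P where
  toFun := GQAut.permP
  map_one' := rfl
  map_mul' _ _ := rfl

private def permLHom {P L : Type*} (I : P → L → Prop) : GQAut I →* Equiv.Perm L where
  toFun := GQAut.permL
  map_one' := rfl
  map_mul' _ _ := rfl


/-- An automorphism of order 7 of a GQ of order (4,12) fixes no point. -/
theorem statement18 {P L : Type*} (I : P → L → Prop) (hGQ : IsGQ I 4 12)
    (x : GQAut I) (hx : orderOf x = 7) :
    ∀ q : P, x.permP q ≠ q := by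
  classical
  have finP := hGQ.finP
  have finL := hGQ.finL
  cases nonempty_fintype P
  cases nonempty_fintype L
  intro q hq
  set σ := x.permP with hσdef
  set τ := x.permL with hτdef
  have hpres : ∀ p ℓ, I (σ p) (τ ℓ) ↔ I p ℓ := x.pres
  have hx7 : x ^ 7 = 1 := by rw [← hx]; exact pow_orderOf_eq_one x
  have hσ7 : σ ^ 7 = 1 := by
    have h := map_pow (permPHom I) x 7
    rw [hx7, map_one] at h
    exact h.symm
  have hτ7 : τ ^ 7 = 1 := by
    have h := map_pow (permLHom I) x 7
    rw [hx7, map_one] at h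
    exact h.symm
  -- basic counts
  have hpts : ∀ ℓ : L, (Finset.univ.filter fun p => I p ℓ).card = 5 := by
    intro ℓ
    have h := hGQ.line_pts ℓ
    rwa [Nat.card_eq_fintype_card, Fintype.card_subtype] at h
  have hlns : ∀ p : P, (Finset.univ.filter fun ℓ => I p ℓ).card = 13 := by
    intro p
    have h := hGQ.pt_lines p
    rwa [Nat.card_eq_fintype_card, Fintype.card_subtype] at h
  -- uniqueness of lines through two points
  have huniq : ∀ (p p' : P), p ≠ p' → ∀ m m', I p m → I p' m → I p m' → I p' m' → m = m' := by
    intro p p' hne m m' h1 h2 h3 h4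
    have hcard := hGQ.unique_line p p' hne
    rw [Nat.card_eq_fintype_card] at hcard
    have := Fintype.card_le_one_iff.mp hcard ⟨m, h1, h2⟩ ⟨m', h3, h4⟩
    exact congrArg Subtype.val this
  -- every fixed line is pointwise fixed
  have hlf : ∀ ℓ : L, τ ℓ = ℓ → ∀ p, I p ℓ → σ p = p := by
    intro ℓ hℓ
    have hstab : ∀ p, I p ℓ ↔ I (σ p) ℓ := by
      intro p
      conv_rhs => rw [← hℓ]
      exact (hpres p ℓ).symm
    have hmod := filter_fixed_modEq σ hσ7 (fun p => I p ℓ) hstab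
    have hsub : (Finset.univ.filter fun p => I p ℓ ∧ σ p = p) ⊆
        (Finset.univ.filter fun p => I p ℓ) := by
      intro p hp
      simp only [Finset.mem_filter] at hp ⊢
      exact ⟨hp.1, hp.2.1⟩
    have hle : (Finset.univ.filter fun p => I p ℓ ∧ σ p = p).card ≤ 5 := by
      rw [← hpts ℓ]; exact Finset.card_le_card hsub
    have heq5 : (Finset.univ.filter fun p => I p ℓ ∧ σ p = p).card = 5 := by
      have hm : (Finset.univ.filter fun p => I p ℓ).card % 7 =
          (Finset.univ.filter fun p => I p ℓ ∧ σ p = p).card % 7 := hmod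
      rw [hpts ℓ] at hm
      omega
    have heq : (Finset.univ.filter fun p => I p ℓ ∧ σ p = p) =
        (Finset.univ.filter fun p => I p ℓ) :=
      Finset.eq_of_subset_of_card_le hsub (by rw [hpts ℓ, heq5])
    intro p hp
    have hmem : p ∈ (Finset.univ.filter fun p => I p ℓ) := by
      simp only [Finset.mem_filter]; exact ⟨Finset.mem_univ p, hp⟩
    rw [← heq] at hmem
    simp only [Finset.mem_filter] at hmem
    exact hmem.2.2
  -- line through two distinct fixed points is fixed
  have h2fix : ∀ (m : L) (p p' : P), p ≠ p' → σ p = p → σ p' = p' → I p m → I p' m →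
      τ m = m := by
    intro m p p' hne hp hp' hpm hp'm
    have h1 : I p (τ m) := by
      have := hpres p m
      rw [hp] at this
      exact this.mpr hpm
    have h2 : I p' (τ m) := by
      have := hpres p' m
      rw [hp'] at this
      exact this.mpr hp'm
    exact huniq p p' hne (τ m) m h1 h2 hpm hp'm
  -- some point is not fixed
  have hex : ∃ z : P, σ z ≠ z := by
    by_contra hall
    push_neg at hall
    have hτall : ∀ ℓ, τ ℓ = ℓ := by
      intro ℓ
      have h5 := hpts ℓ
      have : 1 < (Finset.univ.filter fun p => I p ℓ).card := by omega
      obtain ⟨p, hpmem, p', hp'mem, hne⟩ := Finset.one_lt_card.mp this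
      simp only [Finset.mem_filter] at hpmem hp'mem
      exact h2fix ℓ p p' hne (hall p) (hall p') hpmem.2 hp'mem.2
    have hx1 : x = 1 := by
      ext a
      · exact hall a
      · exact hτall a
    rw [hx1, orderOf_one] at hx
    norm_num at hx
  obtain ⟨z, hz⟩ := hex
  -- each fixed point lies on exactly 6 or 13 fixed lines
  have hd : ∀ p : P, σ p = p →
      6 ≤ (Finset.univ.filter fun ℓ => I p ℓ ∧ τ ℓ = ℓ).card ∧
      ((Finset.univ.filter fun ℓ => I p ℓ ∧ τ ℓ = ℓ).card ≠ 6 →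
        ∀ ℓ, I p ℓ → τ ℓ = ℓ) := by
    intro p hp
    have hstab : ∀ ℓ, I p ℓ ↔ I p (τ ℓ) := by
      intro ℓ
      conv_rhs => rw [← hp]
      exact (hpres p ℓ).symm
    have hmod := filter_fixed_modEq τ hτ7 (fun ℓ => I p ℓ) hstab
    have hsub : (Finset.univ.filter fun ℓ => I p ℓ ∧ τ ℓ = ℓ) ⊆
        (Finset.univ.filter fun ℓ => I p ℓ) := by
      intro ℓ hℓ
      simp only [Finset.mem_filter] at hℓ ⊢
      exact ⟨hℓ.1, hℓ.2.1⟩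
    have hle : (Finset.univ.filter fun ℓ => I p ℓ ∧ τ ℓ = ℓ).card ≤ 13 := by
      rw [← hlns p]; exact Finset.card_le_card hsub
    have hm : (Finset.univ.filter fun ℓ => I p ℓ).card % 7 =
        (Finset.univ.filter fun ℓ => I p ℓ ∧ τ ℓ = ℓ).card % 7 := hmod
    rw [hlns p] at hm
    constructor
    · omega
    · intro hne ℓ hℓ
      have h13 : (Finset.univ.filter fun ℓ => I p ℓ ∧ τ ℓ = ℓ).card = 13 := by omega
      have heq : (Finset.univ.filter fun ℓ => I p ℓ ∧ τ ℓ = ℓ) =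
          (Finset.univ.filter fun ℓ => I p ℓ) :=
        Finset.eq_of_subset_of_card_le hsub (by rw [hlns p, h13])
      have hmem : ℓ ∈ (Finset.univ.filter fun ℓ => I p ℓ) := by
        simp only [Finset.mem_filter]; exact ⟨Finset.mem_univ ℓ, hℓ⟩
      rw [← heq] at hmem
      simp only [Finset.mem_filter] at hmem
      exact hmem.2.2
  -- the set of fixed lines
  set Λ : Finset L := Finset.univ.filter (fun ℓ => τ ℓ = ℓ) with hΛdef
  have hΛmem : ∀ ℓ, ℓ ∈ Λ ↔ τ ℓ = ℓ := by
    intro ℓ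
    simp [hΛdef]
  set Mz : Finset L := Finset.univ.filter (fun ℓ => I z ℓ) with hMzdef
  have hMzcard : Mz.card = 13 := hlns z
  have hzΛ : ∀ ℓ ∈ Λ, ¬ I z ℓ := by
    intro ℓ hℓ hIz
    exact hz (hlf ℓ ((hΛmem ℓ).mp hℓ) z hIz)
  set F : L → P × L := fun ℓ =>
    if h : I z ℓ then (z, ℓ) else (hGQ.gq_axiom z ℓ h).choose with hFdef
  have hFspec : ∀ ℓ, ¬ I z ℓ → (I z (F ℓ).2 ∧ I (F ℓ).1 (F ℓ).2 ∧ I (F ℓ).1 ℓ) ∧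
      ∀ pl : P × L, (I z pl.2 ∧ I pl.1 pl.2 ∧ I pl.1 ℓ) → pl = F ℓ := by
    intro ℓ h
    have hF : F ℓ = (hGQ.gq_axiom z ℓ h).choose := by
      simp only [hFdef]
      rw [dif_neg h]
    rw [hF]
    exact (hGQ.gq_axiom z ℓ h).choose_spec
  have hfmem : ∀ ℓ ∈ Λ, (F ℓ).2 ∈ Mz := by
    intro ℓ hℓ
    have h := (hFspec ℓ (hzΛ ℓ hℓ)).1.1
    simp only [hMzdef, Finset.mem_filter]
    exact ⟨Finset.mem_univ _, h⟩
  have hfibers : Λ.card = ∑ m ∈ Mz, (Λ.filter fun ℓ => (F ℓ).2 = m).card :=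
    Finset.card_eq_sum_card_fiberwise hfmem
  have hfiber6 : ∀ m ∈ Mz, (Λ.filter fun ℓ => (F ℓ).2 = m).card ≤ 6 := by
    intro m hm
    rcases Finset.eq_empty_or_nonempty (Λ.filter fun ℓ => (F ℓ).2 = m) with he | hne
    · rw [he]; simp
    obtain ⟨ℓ₀, hℓ₀⟩ := hne
    have hℓ₀' := Finset.mem_filter.mp hℓ₀
    have hτℓ₀ : τ ℓ₀ = ℓ₀ := (hΛmem ℓ₀).mp hℓ₀'.1
    have hniz₀ : ¬ I z ℓ₀ := hzΛ ℓ₀ hℓ₀'.1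
    obtain ⟨⟨hzm₀, hp₀m₀, hp₀ℓ₀⟩, -⟩ := hFspec ℓ₀ hniz₀
    have hm₀ : (F ℓ₀).2 = m := hℓ₀'.2
    rw [hm₀] at hzm₀ hp₀m₀
    have hσp₀ : σ (F ℓ₀).1 = (F ℓ₀).1 := hlf ℓ₀ hτℓ₀ _ hp₀ℓ₀
    have hτm_ne : ¬ τ m = m := by
      intro htm
      exact hz (hlf m htm z hzm₀)
    have hsubfib : (Λ.filter fun ℓ => (F ℓ).2 = m) ⊆
        (Finset.univ.filter fun ℓ => I (F ℓ₀).1 ℓ ∧ τ ℓ = ℓ) := by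
      intro ℓ hℓ
      have hℓ' := Finset.mem_filter.mp hℓ
      have hτℓ : τ ℓ = ℓ := (hΛmem ℓ).mp hℓ'.1
      have hniz : ¬ I z ℓ := hzΛ ℓ hℓ'.1
      obtain ⟨⟨hzf, hpf, hpl⟩, -⟩ := hFspec ℓ hniz
      rw [hℓ'.2] at hzf hpf
      have hσp : σ (F ℓ).1 = (F ℓ).1 := hlf ℓ hτℓ _ hpl
      have hpp₀ : (F ℓ).1 = (F ℓ₀).1 := by
        by_contra hne
        exact hτm_ne (h2fix m _ _ hne hσp hσp₀ hpf hp₀m₀)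
      simp only [Finset.mem_filter]
      exact ⟨Finset.mem_univ _, by rw [← hpp₀]; exact hpl, hτℓ⟩
    have hd6 : (Finset.univ.filter fun ℓ => I (F ℓ₀).1 ℓ ∧ τ ℓ = ℓ).card = 6 := by
      by_contra hne6
      exact hτm_ne ((hd (F ℓ₀).1 hσp₀).2 hne6 m hp₀m₀)
    calc (Λ.filter fun ℓ => (F ℓ).2 = m).card
        ≤ (Finset.univ.filter fun ℓ => I (F ℓ₀).1 ℓ ∧ τ ℓ = ℓ).card :=
          Finset.card_le_card hsubfib
      _ = 6 := hd6
  have hupper : Λ.card ≤ 78 := by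
    rw [hfibers]
    calc ∑ m ∈ Mz, (Λ.filter fun ℓ => (F ℓ).2 = m).card
        ≤ Mz.card • 6 := Finset.sum_le_card_nsmul Mz _ 6 hfiber6
      _ = 78 := by rw [hMzcard]; norm_num
  -- lower bound
  set A : Finset L := Finset.univ.filter (fun ℓ => I q ℓ ∧ τ ℓ = ℓ) with hAdef
  have hA6 : 6 ≤ A.card := (hd q hq).1
  have hAmem : ∀ ℓ, ℓ ∈ A ↔ I q ℓ ∧ τ ℓ = ℓ := by
    intro ℓ
    simp [hAdef]
  set U : Finset P := Finset.univ.filter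
      (fun u => u ≠ q ∧ σ u = u ∧ ∃ m, I q m ∧ I u m ∧ τ m = m) with hUdef
  have hUmem : ∀ u, u ∈ U ↔ u ≠ q ∧ σ u = u ∧ ∃ m, I q m ∧ I u m ∧ τ m = m := by
    intro u
    simp [hUdef]
  have hU24 : 24 ≤ U.card := by
    have hdisj : ∀ ℓ₁ ∈ A, ∀ ℓ₂ ∈ A, ℓ₁ ≠ ℓ₂ →
        Disjoint ((Finset.univ.filter fun p => I p ℓ₁).erase q)
          ((Finset.univ.filter fun p => I p ℓ₂).erase q) := by
      intro ℓ₁ h₁ ℓ₂ h₂ hne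
      rw [Finset.disjoint_left]
      intro u hu₁ hu₂
      obtain ⟨huq, hu₁'⟩ := Finset.mem_erase.mp hu₁
      obtain ⟨-, hu₂'⟩ := Finset.mem_erase.mp hu₂
      simp only [Finset.mem_filter] at hu₁' hu₂'
      exact hne (huniq q u (fun h => huq h.symm) ℓ₁ ℓ₂ ((hAmem ℓ₁).mp h₁).1 hu₁'.2
        ((hAmem ℓ₂).mp h₂).1 hu₂'.2)
    have hsub : A.biUnion (fun ℓ => (Finset.univ.filter fun p => I p ℓ).erase q) ⊆ U := by
      intro u hu
      obtain ⟨ℓ, hℓA, hu⟩ := Finset.mem_biUnion.mp hu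
      obtain ⟨huq, hu'⟩ := Finset.mem_erase.mp hu
      simp only [Finset.mem_filter] at hu'
      obtain ⟨hqℓ, hτℓ⟩ := (hAmem ℓ).mp hℓA
      exact (hUmem u).mpr ⟨huq, hlf ℓ hτℓ u hu'.2, ℓ, hqℓ, hu'.2, hτℓ⟩
    have hbicard : (A.biUnion (fun ℓ => (Finset.univ.filter fun p => I p ℓ).erase q)).card
        = ∑ ℓ ∈ A, ((Finset.univ.filter fun p => I p ℓ).erase q).card :=
      Finset.card_biUnion hdisj
    have heach : ∀ ℓ ∈ A, ((Finset.univ.filter fun p => I p ℓ).erase q).card = 4 := by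
      intro ℓ hℓ
      obtain ⟨hqℓ, -⟩ := (hAmem ℓ).mp hℓ
      have hqmem : q ∈ (Finset.univ.filter fun p => I p ℓ) := by
        simp only [Finset.mem_filter]
        exact ⟨Finset.mem_univ _, hqℓ⟩
      rw [Finset.card_erase_of_mem hqmem, hpts ℓ]
    calc (24 : ℕ) = 6 * 4 := by norm_num
      _ ≤ A.card * 4 := Nat.mul_le_mul_right 4 hA6
      _ = ∑ ℓ ∈ A, 4 := by rw [Finset.sum_const, smul_eq_mul, mul_comm]
      _ = ∑ ℓ ∈ A, ((Finset.univ.filter fun p => I p ℓ).erase q).card :=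
          (Finset.sum_congr rfl (fun ℓ hℓ => (heach ℓ hℓ).symm))
      _ = (A.biUnion (fun ℓ => (Finset.univ.filter fun p => I p ℓ).erase q)).card :=
          hbicard.symm
      _ ≤ U.card := Finset.card_le_card hsub
  set B : Finset L := Finset.univ.filter (fun n => τ n = n ∧ ¬ I q n) with hBdef
  have hBmem : ∀ n, n ∈ B ↔ τ n = n ∧ ¬ I q n := by
    intro n
    simp [hBdef]
  have hB120 : 120 ≤ B.card := by
    have hdisj : ∀ u₁ ∈ U, ∀ u₂ ∈ U, u₁ ≠ u₂ →
        Disjoint ((Finset.univ.filter fun n => I u₁ n ∧ τ n = n).filter fun n => ¬ I q n)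
          ((Finset.univ.filter fun n => I u₂ n ∧ τ n = n).filter fun n => ¬ I q n) := by
      intro u₁ h₁ u₂ h₂ hne
      rw [Finset.disjoint_left]
      intro n hn₁ hn₂
      simp only [Finset.mem_filter, Finset.mem_univ, true_and] at hn₁ hn₂
      obtain ⟨-, -, m₁, hqm₁, hu₁m₁, -⟩ := (hUmem u₁).mp h₁
      obtain ⟨-, -, m₂, hqm₂, hu₂m₂, -⟩ := (hUmem u₂).mp h₂
      have e := (hGQ.gq_axiom q n hn₁.2).unique
        (show I q (u₁, m₁).2 ∧ I (u₁, m₁).1 (u₁, m₁).2 ∧ I (u₁, m₁).1 n from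
          ⟨hqm₁, hu₁m₁, hn₁.1.1⟩)
        (show I q (u₂, m₂).2 ∧ I (u₂, m₂).1 (u₂, m₂).2 ∧ I (u₂, m₂).1 n from
          ⟨hqm₂, hu₂m₂, hn₂.1.1⟩)
      exact hne (congrArg Prod.fst e)
    have heach : ∀ u ∈ U,
        5 ≤ (((Finset.univ.filter fun n => I u n ∧ τ n = n).filter fun n => ¬ I q n)).card := by
      intro u hu
      obtain ⟨huq, hσu, -⟩ := (hUmem u).mp hu
      have hd6 := (hd u hσu).1
      have hle1 : ((Finset.univ.filter fun n => I u n ∧ τ n = n).filter fun n => I q n).card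
          ≤ 1 := by
        apply Finset.card_le_one.mpr
        intro n₁ hn₁ n₂ hn₂
        simp only [Finset.mem_filter, Finset.mem_univ, true_and] at hn₁ hn₂
        exact huniq q u (fun h => huq h.symm) n₁ n₂ hn₁.2 hn₁.1.1 hn₂.2 hn₂.1.1
      have hsplit := Finset.card_filter_add_card_filter_not
        (s := Finset.univ.filter fun n => I u n ∧ τ n = n) (p := fun n => I q n)
      omega
    have hsub : U.biUnion
        (fun u => (Finset.univ.filter fun n => I u n ∧ τ n = n).filter fun n => ¬ I q n) ⊆ B := by
      intro n hn
      obtain ⟨u, -, hn⟩ := Finset.mem_biUnion.mp hn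
      simp only [Finset.mem_filter, Finset.mem_univ, true_and] at hn
      exact (hBmem n).mpr ⟨hn.1.2, hn.2⟩
    calc (120 : ℕ) = 24 * 5 := by norm_num
      _ ≤ U.card * 5 := Nat.mul_le_mul_right 5 hU24
      _ = U.card • 5 := by rw [smul_eq_mul]
      _ ≤ ∑ u ∈ U,
          (((Finset.univ.filter fun n => I u n ∧ τ n = n).filter fun n => ¬ I q n)).card :=
          Finset.card_nsmul_le_sum U _ 5 heach
      _ = (U.biUnion (fun u =>
          (Finset.univ.filter fun n => I u n ∧ τ n = n).filter fun n => ¬ I q n)).card :=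
          (Finset.card_biUnion hdisj).symm
      _ ≤ B.card := Finset.card_le_card hsub
  -- combine
  have hABsub : A ∪ B ⊆ Λ := by
    intro ℓ hℓ
    rcases Finset.mem_union.mp hℓ with h | h
    · exact (hΛmem ℓ).mpr ((hAmem ℓ).mp h).2
    · exact (hΛmem ℓ).mpr ((hBmem ℓ).mp h).1
  have hABdisj : Disjoint A B := by
    rw [Finset.disjoint_left]
    intro ℓ hA hB
    exact ((hBmem ℓ).mp hB).2 ((hAmem ℓ).mp hA).1
  have hfinal : A.card + B.card ≤ Λ.card := by
    rw [← Finset.card_union_of_disjoint hABdisj]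
    exact Finset.card_le_card hABsub
  omega
end
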